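/- Let $(A, [-,-], \omega)$ be a finite-dimensional symplectic Lie algebra. Then the binary operation $\diamond$ defined implicitly by $\omega(a \diamond b, c) = -\omega(b, [a, c])$ for all $a, b, c$ is well-defined and gives a pre-Lie algebra structure on $A$ whose commutator $a \diamond b - b \diamond a$ equals $[a,b]$. -/

import Mathlib

/-- On a finite-dimensional symplectic Lie algebra `(A, [-,-], ω)` there is a
(well-defined) bilinear operation `⋄` determined by `ω(a⋄b, c) = -ω(b, [a,c])`, and it is a
pre-Lie algebra structure whose commutator recovers the Lie bracket. -/
theorem stmt18 {k L : Type*} [Field k] [LieRing L] [LieAlgebra k L] [FiniteDimensional k L]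
    (ω : L →ₗ[k] L →ₗ[k] k)
    (hskew : ∀ a b : L, ω a b = -ω b a)
    (hnd : ∀ a : L, (∀ b : L, ω a b = 0) → a = 0)
    (hcocycle : ∀ a b c : L, ω ⁅a, b⁆ c + ω ⁅b, c⁆ a + ω ⁅c, a⁆ b = 0) :
    ∃ dia : L →ₗ[k] L →ₗ[k] L,
      (∀ a b c : L, ω (dia a b) c = -ω b ⁅a, c⁆) ∧
      (∀ a b c : L,
        dia (dia a b) c - dia a (dia b c) = dia (dia b a) c - dia b (dia a c)) ∧
      (∀ a b : L, dia a b - dia b a = ⁅a, b⁆) := by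
  have hnd' : LinearMap.BilinForm.Nondegenerate ω :=
    ⟨fun a h => hnd a h, fun a h => hnd a (fun b => by rw [hskew, h, neg_zero])⟩
  set e : L ≃ₗ[k] Module.Dual k L := LinearMap.BilinForm.toDual ω hnd' with he
  have heval : ∀ (f : Module.Dual k L) (c : L), ω (e.symm f) c = f c := by
    intro f c
    exact LinearMap.BilinForm.apply_toDual_symm_apply (hB := hnd') (f := f) (v := c)
  let F : L → L → Module.Dual k L := fun a b => -((ω b).comp (LieAlgebra.ad k L a))
  have hFadd1 : ∀ a a' b, F (a + a') b = F a b + F a' b := by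
    intro a a' b; ext c; simp [F]; ring
  have hFsmul1 : ∀ (r : k) a b, F (r • a) b = r • F a b := by
    intro r a b; ext c; simp [F]
  have hFadd2 : ∀ a b b', F a (b + b') = F a b + F a b' := by
    intro a b b'; ext c; simp [F]; ring
  have hFsmul2 : ∀ (r : k) a b, F a (r • b) = r • F a b := by
    intro r a b; ext c; simp [F]
  let dia : L →ₗ[k] L →ₗ[k] L := LinearMap.mk₂ k (fun a b => e.symm (F a b))
    (fun a a' b => by
      show e.symm (F (a + a') b) = e.symm (F a b) + e.symm (F a' b)
      rw [hFadd1, map_add])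
    (fun r a b => by
      show e.symm (F (r • a) b) = r • e.symm (F a b)
      rw [hFsmul1, map_smul])
    (fun a b b' => by
      show e.symm (F a (b + b')) = e.symm (F a b) + e.symm (F a b')
      rw [hFadd2, map_add])
    (fun r a b => by
      show e.symm (F a (r • b)) = r • e.symm (F a b)
      rw [hFsmul2, map_smul])
  have hω : ∀ a b c, ω (dia a b) c = -ω b ⁅a, c⁆ := by
    intro a b c
    have : ω (e.symm (F a b)) c = F a b c := heval _ _
    simpa [F, dia] using this
  have hcomm : ∀ a b, dia a b - dia b a = ⁅a, b⁆ := by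
    intro a b
    have h0 : ∀ c, ω (dia a b - dia b a - ⁅a, b⁆) c = 0 := by
      intro c
      have h1 := hω a b c
      have h2 := hω b a c
      have h3 := hcocycle a b c
      have s1 := hskew ⁅b, c⁆ a
      have s2 := hskew ⁅c, a⁆ b
      have hba : (⁅c, a⁆ : L) = -⁅a, c⁆ := by
        rw [← lie_skew a c]; exact (neg_neg _).symm
      have s3 : ω b ⁅c, a⁆ = -ω b ⁅a, c⁆ := by rw [hba, map_neg]
      simp only [map_sub, LinearMap.sub_apply, h1, h2]
      linear_combination -h3 + s1 + s2 - s3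
    have h' : dia a b - dia b a - ⁅a, b⁆ = 0 := hnd _ h0
    exact sub_eq_zero.mp h'
  refine ⟨dia, hω, ?_, hcomm⟩
  intro a b c
  have h0 : ∀ d, ω ((dia (dia a b) c - dia a (dia b c)) -
      (dia (dia b a) c - dia b (dia a c))) d = 0 := by
    intro d
    have h1 := hω (dia a b) c d
    have h2 := hω (dia b a) c d
    have h3 := hω a (dia b c) d
    have h4 := hω b (dia a c) d
    have h5 := hω b c ⁅a, d⁆
    have h6 := hω a c ⁅b, d⁆
    have key : ω c ⁅dia a b - dia b a, d⁆ = ω c ⁅⁅a, b⁆, d⁆ := by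
      rw [hcomm]
    have jac : (⁅⁅a, b⁆, d⁆ : L) = ⁅a, ⁅b, d⁆⁆ - ⁅b, ⁅a, d⁆⁆ := lie_lie a b d
    rw [sub_lie, map_sub, jac, map_sub] at key
    simp only [map_sub, LinearMap.sub_apply, h1, h2, h3, h4, h5, h6]
    linear_combination -key
  exact sub_eq_zero.mp (hnd _ h0)
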